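/- Maximum-loss condition under unitary encoding: Let H be a finite-dimensional complex inner product space, ψ ∈ H a unit vector, K a self-adjoint operator on H, and (P_i)_{i∈ι} a finite family of self-adjoint idempotent operators on H with P_i P_j = 0 for i ≠ j and ∑_i P_i = id; set p_i := ⟨ψ, P_i ψ⟩. Then Bob's quantum Fisher information H_B(K) := 4‖Kψ‖² − 4 ∑_{i : p_i > 0} (Re⟨ψ, P_i K ψ⟩)² / p_i vanishes if and only if for every i, ⟨ψ, (P_i K − K P_i) ψ⟩ = 0 and there exists c_i ∈ ℂ with P_i K ψ = c_i · P_i ψ (the latter condition is equivalent to Kψ lying in the span of the vectors P_i ψ). -/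

import Mathlib

open scoped ComplexConjugate

lemma qrf_aux {H : Type*} [NormedAddCommGroup H] [InnerProductSpace ℂ H] (v w : H) :
    0 ≤ ‖w‖ ^ 2 - (if 0 < ‖v‖ ^ 2 then ((inner ℂ v w : ℂ)).re ^ 2 / ‖v‖ ^ 2 else 0) ∧
    (‖w‖ ^ 2 - (if 0 < ‖v‖ ^ 2 then ((inner ℂ v w : ℂ)).re ^ 2 / ‖v‖ ^ 2 else 0) = 0 ↔
      ((inner ℂ v w : ℂ)).im = 0 ∧ ∃ c : ℂ, w = c • v) := by
  by_cases hv : v = 0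
  · subst hv
    rw [if_neg (by simp)]
    refine ⟨by rw [sub_zero]; positivity, ?_⟩
    rw [sub_zero]
    · rw [pow_eq_zero_iff (by norm_num : 2 ≠ 0), norm_eq_zero]
      constructor
      · intro h; exact ⟨by simp, 0, by simp [h]⟩
      · rintro ⟨-, c, rfl⟩; simp
  · have hv2 : (0:ℝ) < ‖v‖ ^ 2 := by
      have := norm_pos_iff.mpr hv; positivity
    have hvv : (inner ℂ v v : ℂ) = ((‖v‖ ^ 2 : ℝ) : ℂ) := by
      exact_mod_cast inner_self_eq_norm_sq_to_K v
    set c : ℂ := (inner ℂ v w : ℂ) / ((‖v‖ ^ 2 : ℝ) : ℂ) with hc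
    have hvne : (((‖v‖ ^ 2 : ℝ)) : ℂ) ≠ 0 := Complex.ofReal_ne_zero.mpr (ne_of_gt hv2)
    have hin : (inner ℂ v w : ℂ) = c * ((‖v‖ ^ 2 : ℝ) : ℂ) := by
      rw [hc, div_mul_cancel₀ _ hvne]
    set u : H := w - c • v with hu
    have hvu : (inner ℂ v u : ℂ) = 0 := by
      rw [hu, inner_sub_right, inner_smul_right, hvv, ← hin, sub_self]
    have hw : w = c • v + u := by simp [hu]
    have hcv : ‖c • v‖ ^ 2 = (c.re ^ 2 + c.im ^ 2) * ‖v‖ ^ 2 := by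
      rw [norm_smul, mul_pow, Complex.sq_norm, Complex.normSq_apply]
      ring
    have hnorm : ‖w‖ ^ 2 = (c.re ^ 2 + c.im ^ 2) * ‖v‖ ^ 2 + ‖u‖ ^ 2 := by
      have hz : (inner ℂ (c • v) u : ℂ) = 0 := by rw [inner_smul_left, hvu, mul_zero]
      rw [hw, @norm_add_sq ℂ, hz, map_zero, hcv]
      ring
    have hre : ((inner ℂ v w : ℂ)).re = c.re * ‖v‖ ^ 2 := by
      rw [hin, Complex.mul_re, Complex.ofReal_re, Complex.ofReal_im]; ring
    have him : ((inner ℂ v w : ℂ)).im = c.im * ‖v‖ ^ 2 := by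
      rw [hin, Complex.mul_im, Complex.ofReal_re, Complex.ofReal_im]; ring
    have hval : ‖w‖ ^ 2 - (if 0 < ‖v‖ ^ 2 then ((inner ℂ v w : ℂ)).re ^ 2 / ‖v‖ ^ 2 else 0)
        = c.im ^ 2 * ‖v‖ ^ 2 + ‖u‖ ^ 2 := by
      rw [if_pos hv2, hnorm, hre]
      field_simp
      ring
    rw [hval]
    constructor
    · positivity
    · constructor
      · intro h
        have h1 : c.im ^ 2 * ‖v‖ ^ 2 = 0 ∧ ‖u‖ ^ 2 = 0 := by
          constructor <;> nlinarith [sq_nonneg c.im, sq_nonneg ‖u‖, hv2,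
            mul_nonneg (sq_nonneg c.im) (le_of_lt hv2)]
        have hcim : c.im = 0 := by
          have h2 : c.im ^ 2 = 0 := by
            rcases mul_eq_zero.mp h1.1 with h | h
            · exact h
            · exact absurd h (ne_of_gt hv2)
          exact pow_eq_zero_iff (by norm_num : 2 ≠ 0) |>.mp h2
        have huz : u = 0 := by
          have := h1.2
          rw [pow_eq_zero_iff (by norm_num : 2 ≠ 0), norm_eq_zero] at this
          exact this
        refine ⟨by rw [him, hcim, zero_mul], c, ?_⟩
        rw [hw, huz, add_zero]
      · rintro ⟨him0, c', rfl⟩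
        have hcc : c = c' := by
          rw [hc, inner_smul_right, hvv, mul_div_assoc, div_self hvne, mul_one]
        have huz : u = 0 := by rw [hu, hcc, sub_self]
        have hcim : c.im = 0 := by
          rw [him] at him0
          rcases mul_eq_zero.mp him0 with h | h
          · exact h
          · exact absurd h (ne_of_gt hv2)
        rw [huz, hcim]
        norm_num

/-- Maximum-loss condition under unitary encoding: Bob's quantum Fisher
information vanishes if and only if `⟨ψ, (P_i K − K P_i) ψ⟩ = 0` and
`P_i K ψ` is a multiple of `P_i ψ` for every `i`. -/
theorem qrf_max_loss_unitary_iff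
    {H : Type*} [NormedAddCommGroup H] [InnerProductSpace ℂ H] [FiniteDimensional ℂ H]
    {ι : Type*} [Fintype ι]
    (ψ : H) (hψ : ‖ψ‖ = 1)
    (K : H →L[ℂ] H) (hK : IsSelfAdjoint K)
    (P : ι → H →L[ℂ] H)
    (hsa : ∀ i, IsSelfAdjoint (P i))
    (hidem : ∀ i, P i * P i = P i)
    (horth : ∀ i j, i ≠ j → P i * P j = 0)
    (hsum : ∑ i, P i = 1) :
    (4 * ‖K ψ‖ ^ 2
        - 4 * ∑ i, (if 0 < ((inner ℂ ψ (P i ψ) : ℂ)).re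
            then ((inner ℂ ψ (P i (K ψ)) : ℂ)).re ^ 2 / ((inner ℂ ψ (P i ψ) : ℂ)).re else 0)
      = 0)
    ↔ ∀ i, (inner ℂ ψ (P i (K ψ)) : ℂ) - (inner ℂ ψ (K (P i ψ)) : ℂ) = 0
        ∧ ∃ c : ℂ, P i (K ψ) = c • P i ψ := by
  set v : ι → H := fun i => P i ψ with hv
  set w : ι → H := fun i => P i (K ψ) with hw
  have hPinner : ∀ i (x y : H), (inner ℂ x (P i y) : ℂ) = inner ℂ (P i x) (P i y) := by
    intro i x y
    conv_lhs => rw [← hidem i]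
    rw [ContinuousLinearMap.mul_apply]
    exact ((hsa i).isSymmetric x (P i y)).symm
  have h1 : ∀ i, (inner ℂ ψ (P i (K ψ)) : ℂ) = inner ℂ (v i) (w i) := fun i => hPinner i ψ (K ψ)
  have h2 : ∀ i, (inner ℂ ψ (K (P i ψ)) : ℂ) = conj (inner ℂ (v i) (w i) : ℂ) := by
    intro i
    have e : (inner ℂ ψ (K (P i ψ)) : ℂ) = inner ℂ (K ψ) (P i ψ) := (hK.isSymmetric ψ (P i ψ)).symm
    rw [e, hPinner i (K ψ) ψ, ← inner_conj_symm]
  have h3 : ∀ i, ((inner ℂ ψ (P i ψ) : ℂ)).re = ‖v i‖ ^ 2 := by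
    intro i
    have hvv : (inner ℂ (v i) (v i) : ℂ) = ((‖v i‖ ^ 2 : ℝ) : ℂ) := by
      exact_mod_cast inner_self_eq_norm_sq_to_K (v i)
    rw [hPinner i ψ ψ, hvv, Complex.ofReal_re]
  have h4 : ‖K ψ‖ ^ 2 = ∑ i, ‖w i‖ ^ 2 := by
    have e1 : (inner ℂ (K ψ) (K ψ) : ℂ) = ∑ i, (inner ℂ (w i) (w i) : ℂ) := by
      have e0 : (inner ℂ (K ψ) (K ψ) : ℂ) = inner ℂ (K ψ) ((∑ i, P i) (K ψ)) := by
        rw [hsum]; simp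
      rw [e0, ContinuousLinearMap.sum_apply, inner_sum]
      exact Finset.sum_congr rfl fun i _ => hPinner i (K ψ) (K ψ)
    have hsq : ∀ x : H, (inner ℂ x x : ℂ) = ((‖x‖ ^ 2 : ℝ) : ℂ) := fun x => by
      exact_mod_cast inner_self_eq_norm_sq_to_K x
    have e2 : ((‖K ψ‖ ^ 2 : ℝ) : ℂ) = ∑ i, ((‖w i‖ ^ 2 : ℝ) : ℂ) := by
      simpa [hsq] using e1
    exact_mod_cast e2
  have key : 4 * ‖K ψ‖ ^ 2
        - 4 * ∑ i, (if 0 < ((inner ℂ ψ (P i ψ) : ℂ)).re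
            then ((inner ℂ ψ (P i (K ψ)) : ℂ)).re ^ 2 / ((inner ℂ ψ (P i ψ) : ℂ)).re else 0)
      = 4 * ∑ i, (‖w i‖ ^ 2
          - (if 0 < ‖v i‖ ^ 2 then ((inner ℂ (v i) (w i) : ℂ)).re ^ 2 / ‖v i‖ ^ 2 else 0)) := by
    rw [Finset.sum_sub_distrib, h4, mul_sub]
    congr 2
    exact Finset.sum_congr rfl fun i _ => by rw [h1, h3]
  rw [key]
  have hnn : ∀ i ∈ Finset.univ, (0:ℝ) ≤ ‖w i‖ ^ 2
      - (if 0 < ‖v i‖ ^ 2 then ((inner ℂ (v i) (w i) : ℂ)).re ^ 2 / ‖v i‖ ^ 2 else 0) :=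
    fun i _ => (qrf_aux (v i) (w i)).1
  constructor
  · intro h
    have hsum0 : ∑ i, (‖w i‖ ^ 2
        - (if 0 < ‖v i‖ ^ 2 then ((inner ℂ (v i) (w i) : ℂ)).re ^ 2 / ‖v i‖ ^ 2 else 0)) = 0 := by
      linarith
    intro i
    have hz := (Finset.sum_eq_zero_iff_of_nonneg hnn).mp hsum0 i (Finset.mem_univ i)
    obtain ⟨him, c, hc⟩ := (qrf_aux (v i) (w i)).2.mp hz
    refine ⟨?_, c, hc⟩
    rw [h1, h2, sub_eq_zero]
    exact (Complex.conj_eq_iff_im.mpr him).symm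
  · intro h
    have hz : ∀ i ∈ Finset.univ, (‖w i‖ ^ 2
        - (if 0 < ‖v i‖ ^ 2 then ((inner ℂ (v i) (w i) : ℂ)).re ^ 2 / ‖v i‖ ^ 2 else 0)) = 0 := by
      intro i _
      obtain ⟨hd, c, hc⟩ := h i
      rw [h1, h2, sub_eq_zero] at hd
      exact (qrf_aux (v i) (w i)).2.mpr ⟨Complex.conj_eq_iff_im.mp hd.symm, c, hc⟩
    rw [Finset.sum_eq_zero hz]
    ring
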